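/- If a behavioral strategy profile σ of the infinitely repeated game with perfect monitoring is a Blackwell SPNE above δ̲ < 1, then for every discount factor vector δ with δ_i ≥ δ̲ for all i and for every player i, the equilibrium payoff satisfies U_i(σ,δ) ≥ v̲_i^MI, where v̲_i^MI := min_{α ∈ 𝒜^MI} max_{a_i ∈ A_i} g_i(a_i, α_{-i}) (the minimum is attained since 𝒜^MI is nonempty and compact). -/

import Mathlib

open Finset

section StageGame

variable {I : Type*} [Fintype I] [DecidableEq I]
variable {A : I → Type*} [∀ i, Fintype (A i)] [∀ i, DecidableEq (A i)] [∀ i, Nonempty (A i)]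

/-- `α` is a profile of mixed actions: each component is a probability vector. -/
def IsMixed (α : ∀ i, A i → ℝ) : Prop :=
  ∀ i, (∀ a, 0 ≤ α i a) ∧ (∑ a, α i a) = 1

/-- The point mass on a pure action. -/
def pureAction {I : Type*} {A : I → Type*} [∀ i, DecidableEq (A i)] {i : I} (a : A i) :
    A i → ℝ := fun b => if b = a then 1 else 0

/-- The profile of point masses on a pure action profile. -/
def pureProfile (a : ∀ i, A i) : ∀ i, A i → ℝ := fun i => pureAction (a i)

/-- Multilinear extension of the reward function to mixed action profiles. -/
noncomputable def mixedPayoff (g : I → (∀ i, A i) → ℝ) (i : I) (α : ∀ j, A j → ℝ) : ℝ :=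
  ∑ a : ∀ j, A j, (∏ j, α j (a j)) * g i a

/-- Payoff to player `i` from playing the pure action `ai` against `α₋ᵢ`. -/
noncomputable def devPayoff (g : I → (∀ i, A i) → ℝ) (i : I) (α : ∀ j, A j → ℝ)
    (ai : A i) : ℝ :=
  mixedPayoff g i (Function.update α i (pureAction ai))

/-- The set `𝒜^MI` of myopically indifferent mixed action profiles. -/
def MIset (g : I → (∀ i, A i) → ℝ) : Set (∀ i, A i → ℝ) :=
  {α | IsMixed α ∧ ∀ i, ∀ ai : A i, 0 < α i ai → devPayoff g i α ai = mixedPayoff g i α}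

/-- Nash equilibrium of the stage game (in mixed strategies). -/
def IsStageNash (g : I → (∀ i, A i) → ℝ) (α : ∀ i, A i → ℝ) : Prop :=
  IsMixed α ∧ ∀ (i : I) (ai : A i), devPayoff g i α ai ≤ mixedPayoff g i α

end StageGame

section MinmaxMI

variable {I : Type*} [Fintype I] [DecidableEq I]
variable {A : I → Type*} [∀ i, Fintype (A i)] [∀ i, DecidableEq (A i)] [∀ i, Nonempty (A i)]

/-- The MI-minmax payoff `v̲ᵢ^MI` of player `i`: the infimum (attained, since `𝒜^MI` is
nonempty and compact) over myopically indifferent profiles `α` of the best reply payoff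
`max_{aᵢ} gᵢ(aᵢ, α₋ᵢ)`. -/
noncomputable def minmaxMI (g : I → (∀ i, A i) → ℝ) (i : I) : ℝ :=
  sInf {x : ℝ | ∃ α ∈ MIset g, x = ⨆ ai : A i, devPayoff g i α ai}

end MinmaxMI

section Repeated

variable {I : Type*} [Fintype I] [DecidableEq I]
variable {A : I → Type*} [∀ i, Fintype (A i)] [∀ i, DecidableEq (A i)] [∀ i, Nonempty (A i)]

/-- A behavioral strategy profile is valid if, after each history (a finite list of pure
action profiles, most recent first), every player's prescribed mixing is a probability
vector. -/
def ValidStrat (σ : ∀ i : I, List (∀ j, A j) → A i → ℝ) : Prop :=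
  ∀ i h, (∀ a, 0 ≤ σ i h a) ∧ (∑ a, σ i h a) = 1

/-- Probability of a finite history (most recent action profile first) under `σ`. -/
noncomputable def histProb (σ : ∀ i : I, List (∀ j, A j) → A i → ℝ) :
    List (∀ j, A j) → ℝ
  | [] => 1
  | a :: h => (∏ i, σ i h (a i)) * histProb σ h

/-- Expected reward of player `i` in round `t + 1` under `σ`. -/
noncomputable def expReward (g : I → (∀ i, A i) → ℝ)
    (σ : ∀ i : I, List (∀ j, A j) → A i → ℝ) (i : I) (t : ℕ) : ℝ :=
  ∑ v : Fin (t + 1) → (∀ j, A j), histProb σ (List.ofFn v) * g i (v 0)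

/-- Average discounted payoff of player `i` under `σ` at discount factor vector `δ`. -/
noncomputable def payoff (g : I → (∀ i, A i) → ℝ)
    (σ : ∀ i : I, List (∀ j, A j) → A i → ℝ) (δ : I → ℝ) (i : I) : ℝ :=
  (1 - δ i) * ∑' t : ℕ, δ i ^ t * expReward g σ i t

/-- `σ` is a Nash equilibrium of the repeated game at `δ`. -/
def IsNash (g : I → (∀ i, A i) → ℝ)
    (σ : ∀ i : I, List (∀ j, A j) → A i → ℝ) (δ : I → ℝ) : Prop :=
  ValidStrat σ ∧
    ∀ (i : I) (τ : List (∀ j, A j) → A i → ℝ),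
      (∀ h, (∀ a, 0 ≤ τ h a) ∧ (∑ a, τ h a) = 1) →
      payoff g (Function.update σ i τ) δ i ≤ payoff g σ δ i

/-- The continuation strategy profile after history `h`. -/
def contStrat (σ : ∀ i : I, List (∀ j, A j) → A i → ℝ) (h : List (∀ j, A j)) :
    ∀ i : I, List (∀ j, A j) → A i → ℝ :=
  fun i h' => σ i (h' ++ h)

/-- `σ` is a subgame-perfect Nash equilibrium at `δ`. -/
def IsSPNE (g : I → (∀ i, A i) → ℝ)
    (σ : ∀ i : I, List (∀ j, A j) → A i → ℝ) (δ : I → ℝ) : Prop :=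
  ∀ h : List (∀ j, A j), IsNash g (contStrat σ h) δ

/-- `σ` is a Blackwell SPNE above `δlow`: an SPNE at every discount factor vector all of
whose components lie in `[δlow, 1)`. -/
def IsBlackwellSPNE (g : I → (∀ i, A i) → ℝ)
    (σ : ∀ i : I, List (∀ j, A j) → A i → ℝ) (δlow : ℝ) : Prop :=
  ∀ δ : I → ℝ, (∀ i, δlow ≤ δ i ∧ δ i < 1) → IsSPNE g σ δ

end Repeated

set_option linter.unusedSectionVars false
section AuxBasic

variable {I : Type*} [Fintype I] [DecidableEq I]
variable {A : I → Type*} [∀ i, Fintype (A i)] [∀ i, DecidableEq (A i)] [∀ i, Nonempty (A i)]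

/-- A uniform bound on rewards. -/
noncomputable def gBound (g : I → (∀ i, A i) → ℝ) (i : I) : ℝ := ∑ a : ∀ j, A j, |g i a|

lemma abs_g_le_gBound (g : I → (∀ i, A i) → ℝ) (i : I) (a : ∀ j, A j) :
    |g i a| ≤ gBound g i :=
  Finset.single_le_sum (f := fun a => |g i a|) (fun _ _ => abs_nonneg _) (mem_univ a)

lemma gBound_nonneg (g : I → (∀ i, A i) → ℝ) (i : I) : 0 ≤ gBound g i :=
  Finset.sum_nonneg fun _ _ => abs_nonneg _

lemma prod_weights_nonneg {α : ∀ i, A i → ℝ} (hα : IsMixed α) (a : ∀ j, A j) :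
    0 ≤ ∏ j, α j (a j) :=
  Finset.prod_nonneg fun j _ => (hα j).1 (a j)

lemma sum_prod_weights {α : ∀ i, A i → ℝ} (hα : IsMixed α) :
    ∑ a : ∀ j, A j, ∏ j, α j (a j) = 1 := by
  rw [← Fintype.prod_sum]
  simp only [(fun j => (hα j).2 : ∀ j, ∑ b, α j b = 1)]
  simp

lemma abs_mixedPayoff_le {g : I → (∀ i, A i) → ℝ} {i : I} {α : ∀ i, A i → ℝ}
    (hα : IsMixed α) : |mixedPayoff g i α| ≤ gBound g i := by
  unfold mixedPayoff
  calc |∑ a : ∀ j, A j, (∏ j, α j (a j)) * g i a|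
      ≤ ∑ a : ∀ j, A j, |(∏ j, α j (a j)) * g i a| := Finset.abs_sum_le_sum_abs _ _
    _ ≤ ∑ a : ∀ j, A j, (∏ j, α j (a j)) * gBound g i := by
        refine Finset.sum_le_sum fun a _ => ?_
        rw [abs_mul, abs_of_nonneg (prod_weights_nonneg hα a)]
        exact mul_le_mul_of_nonneg_left
          ((abs_g_le_gBound g i a).trans (le_abs_self _)
            |>.trans (le_of_eq (abs_of_nonneg (gBound_nonneg g i)))) (prod_weights_nonneg hα a)
    _ = gBound g i := by rw [← Finset.sum_mul, sum_prod_weights hα, one_mul]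

lemma pureAction_valid {i : I} (ai : A i) :
    (∀ a, 0 ≤ pureAction ai a) ∧ (∑ a, pureAction ai a) = 1 := by
  constructor
  · intro a; unfold pureAction; positivity
  · simp [pureAction]

lemma isMixed_update {α : ∀ i, A i → ℝ} (hα : IsMixed α) {i : I} (ai : A i) :
    IsMixed (Function.update α i (pureAction ai)) := by
  intro j
  by_cases hj : j = i
  · subst hj; rw [Function.update_self]; exact pureAction_valid ai
  · rw [Function.update_of_ne hj]; exact hα j

lemma abs_devPayoff_le {g : I → (∀ i, A i) → ℝ} {i : I} {α : ∀ i, A i → ℝ}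
    (hα : IsMixed α) (ai : A i) : |devPayoff g i α ai| ≤ gBound g i :=
  abs_mixedPayoff_le (isMixed_update hα ai)

end AuxBasic

set_option linter.unusedSectionVars false

section AuxHist

variable {I : Type*} [Fintype I] [DecidableEq I]
variable {A : I → Type*} [∀ i, Fintype (A i)] [∀ i, DecidableEq (A i)] [∀ i, Nonempty (A i)]

lemma ofFn_cons {n : ℕ} (a : ∀ j, A j) (w : Fin n → ∀ j, A j) :
    List.ofFn (Fin.cons a w) = a :: List.ofFn w := by
  rw [List.ofFn_succ]
  simp

lemma histProb_nonneg {σ : ∀ i : I, List (∀ j, A j) → A i → ℝ} (hσ : ValidStrat σ) :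
    ∀ l, 0 ≤ histProb σ l := by
  intro l
  induction l with
  | nil => exact zero_le_one
  | cons b h ih =>
      exact mul_nonneg (Finset.prod_nonneg fun j _ => (hσ j h).1 (b j)) ih

lemma stage_sum {σ : ∀ i : I, List (∀ j, A j) → A i → ℝ} (hσ : ValidStrat σ)
    (h : List (∀ j, A j)) : ∑ a : ∀ j, A j, ∏ j, σ j h (a j) = 1 :=
  sum_prod_weights (fun j => hσ j h)

lemma sum_histProb {σ : ∀ i : I, List (∀ j, A j) → A i → ℝ} (hσ : ValidStrat σ) :
    ∀ t : ℕ, ∑ w : Fin t → (∀ j, A j), histProb σ (List.ofFn w) = 1 := by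
  intro t
  induction t with
  | zero => simp [histProb]
  | succ t ih =>
      rw [← Equiv.sum_comp (Fin.consEquiv (fun _ : Fin (t + 1) => ∀ j, A j))
        (fun w => histProb σ (List.ofFn w))]
      rw [Fintype.sum_prod_type]
      have : ∀ (a : ∀ j, A j) (w : Fin t → ∀ j, A j),
          histProb σ (List.ofFn (Fin.consEquiv (fun _ : Fin (t+1) => ∀ j, A j) (a, w)))
          = (∏ j, σ j (List.ofFn w) (a j)) * histProb σ (List.ofFn w) := by
        intro a w
        have : (Fin.consEquiv (fun _ : Fin (t+1) => ∀ j, A j)) (a, w) = Fin.cons a w := rfl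
        rw [this, ofFn_cons]
        rfl
      simp only [this]
      rw [Finset.sum_comm]
      have : ∀ w : Fin t → ∀ j, A j,
          ∑ a : ∀ j, A j, (∏ j, σ j (List.ofFn w) (a j)) * histProb σ (List.ofFn w)
          = histProb σ (List.ofFn w) := by
        intro w
        rw [← Finset.sum_mul, stage_sum hσ, one_mul]
      simp only [this, ih]

lemma expReward_eq_sum (g : I → (∀ i, A i) → ℝ)
    (σ : ∀ i : I, List (∀ j, A j) → A i → ℝ) (i : I) (t : ℕ) :
    expReward g σ i t = ∑ w : Fin t → (∀ j, A j),
      histProb σ (List.ofFn w) * mixedPayoff g i (fun j => σ j (List.ofFn w)) := by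
  unfold expReward
  rw [← Equiv.sum_comp (Fin.consEquiv (fun _ : Fin (t + 1) => ∀ j, A j))
    (fun v => histProb σ (List.ofFn v) * g i (v 0))]
  rw [Fintype.sum_prod_type]
  rw [Finset.sum_comm]
  refine Finset.sum_congr rfl fun w _ => ?_
  rw [mixedPayoff, Finset.mul_sum]
  refine Finset.sum_congr rfl fun a _ => ?_
  have h1 : (Fin.consEquiv (fun _ : Fin (t+1) => ∀ j, A j)) (a, w) = Fin.cons a w := rfl
  rw [h1, ofFn_cons]
  have h2 : histProb σ (a :: List.ofFn w)
      = (∏ j, σ j (List.ofFn w) (a j)) * histProb σ (List.ofFn w) := rfl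
  rw [h2]
  simp only [Fin.cons_zero]
  ring

lemma abs_expReward_le {g : I → (∀ i, A i) → ℝ} {σ : ∀ i : I, List (∀ j, A j) → A i → ℝ}
    (hσ : ValidStrat σ) (i : I) (t : ℕ) : |expReward g σ i t| ≤ gBound g i := by
  rw [expReward_eq_sum]
  calc |∑ w : Fin t → (∀ j, A j),
        histProb σ (List.ofFn w) * mixedPayoff g i (fun j => σ j (List.ofFn w))|
      ≤ ∑ w : Fin t → (∀ j, A j),
        |histProb σ (List.ofFn w) * mixedPayoff g i (fun j => σ j (List.ofFn w))| :=
        Finset.abs_sum_le_sum_abs _ _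
    _ ≤ ∑ w : Fin t → (∀ j, A j), histProb σ (List.ofFn w) * gBound g i := by
        refine Finset.sum_le_sum fun w _ => ?_
        rw [abs_mul, abs_of_nonneg (histProb_nonneg hσ _)]
        exact mul_le_mul_of_nonneg_left
          (abs_mixedPayoff_le (fun j => hσ j (List.ofFn w))) (histProb_nonneg hσ _)
    _ = gBound g i := by rw [← Finset.sum_mul, sum_histProb hσ, one_mul]

end AuxHist

section AuxTsum

lemma summable_discounted {c : ℕ → ℝ} {C x : ℝ} (hx0 : 0 ≤ x) (hx1 : x < 1)
    (hc : ∀ t, |c t| ≤ C) : Summable (fun t => x ^ t * c t) := by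
  refine Summable.of_norm_bounded
    ((summable_geometric_of_lt_one hx0 hx1).mul_left C) fun t => ?_
  rw [Real.norm_eq_abs, abs_mul, abs_pow, abs_of_nonneg hx0, mul_comm]
  exact mul_le_mul_of_nonneg_right (hc t) (pow_nonneg hx0 t)

lemma le_discounted_sum {c : ℕ → ℝ} {C v x : ℝ} (hx0 : 0 ≤ x) (hx1 : x < 1)
    (hc : ∀ t, |c t| ≤ C) (hv : ∀ t, v ≤ c t) :
    v ≤ (1 - x) * ∑' t, x ^ t * c t := by
  have hs : Summable (fun t => x ^ t * c t) := summable_discounted hx0 hx1 hc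
  have hg : Summable (fun t : ℕ => x ^ t) := summable_geometric_of_lt_one hx0 hx1
  have h2 : (∑' t : ℕ, x ^ t * v) ≤ ∑' t, x ^ t * c t :=
    Summable.tsum_le_tsum (fun t => mul_le_mul_of_nonneg_left (hv t) (pow_nonneg hx0 t))
      (hg.mul_right v) hs
  have h3 : (∑' t : ℕ, x ^ t * v) = (1 - x)⁻¹ * v := by
    rw [tsum_mul_right, tsum_geometric_of_lt_one hx0 hx1, mul_comm]
  have h1x : 0 < 1 - x := by linarith
  calc v = (1 - x) * ((1 - x)⁻¹ * v) := by field_simp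
    _ ≤ (1 - x) * ∑' t, x ^ t * c t := by
        refine mul_le_mul_of_nonneg_left ?_ h1x.le
        rw [← h3]; exact h2

/-- If a power series with bounded coefficients sums to zero on `[δlow, 1)`, then its
constant coefficient is zero. -/
lemma coeff_zero_eq_zero_of_tsum_eq_zero (d : ℕ → ℝ) (C : ℝ) (hd : ∀ t, |d t| ≤ C)
    (δlow : ℝ) (h0 : 0 ≤ δlow) (h1 : δlow < 1)
    (hz : ∀ x, δlow ≤ x → x < 1 → ∑' t, d t * x ^ t = 0) : d 0 = 0 := by
  set φ : ℝ → ℝ := fun x => ∑' t, d t * x ^ t with hφ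
  set p : FormalMultilinearSeries ℝ ℝ ℝ :=
    fun n => d n • ContinuousMultilinearMap.mkPiAlgebraFin ℝ n ℝ with hp
  have hpn : ∀ n, ‖p n‖ = |d n| := by
    intro n
    show ‖d n • ContinuousMultilinearMap.mkPiAlgebraFin ℝ n ℝ‖ = |d n|
    rw [norm_smul (d n) (ContinuousMultilinearMap.mkPiAlgebraFin ℝ n ℝ), ContinuousMultilinearMap.norm_mkPiAlgebraFin, mul_one, Real.norm_eq_abs]
  have hsum : ∀ y : ℝ, |y| < 1 → Summable (fun n => d n * y ^ n) := by
    intro y hy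
    refine Summable.of_norm_bounded
      ((summable_geometric_of_lt_one (abs_nonneg y) hy).mul_left C) fun t => ?_
    rw [Real.norm_eq_abs, abs_mul, abs_pow]
    exact mul_le_mul_of_nonneg_right (hd t) (pow_nonneg (abs_nonneg y) t)
  have hmem : ∀ y : ℝ, y ∈ Metric.eball (0 : ℝ) 1 ↔ |y| < 1 := by
    intro y
    rw [show (1 : ENNReal) = ENNReal.ofReal (1 : ℝ) by simp, Metric.emetric_ball,
      Metric.mem_ball, Real.dist_eq, sub_zero]
  have hball : HasFPowerSeriesOnBall φ p 0 1 := by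
    refine ⟨?_, one_pos, ?_⟩
    · have h := p.le_radius_of_bound C (r := 1) (fun n => by rw [hpn n]; simpa using hd n)
      simpa using h
    · intro y hy
      have hy' : |y| < 1 := (hmem y).1 hy
      have happ : (fun n => p n fun _ => y) = fun n => d n * y ^ n := by
        funext n
        rw [hp]
        simp only [ContinuousMultilinearMap.smul_apply,
          ContinuousMultilinearMap.mkPiAlgebraFin_apply, smul_eq_mul]
        congr 1
        rw [List.prod_ofFn, Finset.prod_const, Finset.card_univ, Fintype.card_fin]
      rw [happ, zero_add]
      exact (hsum y hy').hasSum
  have hA : AnalyticOnNhd ℝ φ (Metric.eball (0 : ℝ) 1) := hball.analyticOnNhd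
  have hpre : IsPreconnected (Metric.eball (0 : ℝ) 1) := by
    rw [show (1 : ENNReal) = ENNReal.ofReal (1 : ℝ) by simp, Metric.emetric_ball]
    exact (convex_ball (0 : ℝ) 1).isPreconnected
  have hz₀mem : (δlow + 1) / 2 ∈ Metric.eball (0 : ℝ) 1 := by
    rw [hmem, abs_of_nonneg (by linarith)]; linarith
  have hev : φ =ᶠ[nhds ((δlow + 1) / 2)] 0 := by
    have hIoo : Set.Ioo δlow 1 ∈ nhds ((δlow + 1) / 2) :=
      Ioo_mem_nhds (by linarith) (by linarith)
    filter_upwards [hIoo] with x hx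
    exact hz x hx.1.le hx.2
  have hEq := hA.eqOn_zero_of_preconnected_of_eventuallyEq_zero hpre hz₀mem hev
  have h00 : φ 0 = 0 := hEq (by rw [hmem]; norm_num)
  have : φ 0 = d 0 := by
    show (∑' t : ℕ, d t * (0 : ℝ) ^ t) = d 0
    rw [tsum_eq_single 0 (fun t ht => by simp [zero_pow ht])]
    simp
  rw [this] at h00
  exact h00

end AuxTsum

section AuxDev

set_option linter.unusedSectionVars false

variable {I : Type*} [Fintype I] [DecidableEq I]
variable {A : I → Type*} [∀ i, Fintype (A i)] [∀ i, DecidableEq (A i)] [∀ i, Nonempty (A i)]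

/-- Deviate in the first round to the pure action `aj`, then play like `σ j`. -/
noncomputable def devStrat (σ : ∀ i : I, List (∀ j, A j) → A i → ℝ) (j : I) (aj : A j) :
    List (∀ j, A j) → A j → ℝ :=
  fun h => if h = [] then pureAction aj else σ j h

lemma devStrat_valid {σ : ∀ i : I, List (∀ j, A j) → A i → ℝ} (hσ : ValidStrat σ)
    (j : I) (aj : A j) :
    ∀ h, (∀ a, 0 ≤ devStrat σ j aj h a) ∧ (∑ a, devStrat σ j aj h a) = 1 := by
  intro h
  unfold devStrat
  by_cases hh : h = []
  · simpa [hh] using pureAction_valid aj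
  · simpa [hh] using hσ j h

lemma valid_update {σ : ∀ i : I, List (∀ j, A j) → A i → ℝ} (hσ : ValidStrat σ) {i : I}
    {τ : List (∀ j, A j) → A i → ℝ} (hτ : ∀ h, (∀ a, 0 ≤ τ h a) ∧ (∑ a, τ h a) = 1) :
    ValidStrat (Function.update σ i τ) := by
  intro k h
  by_cases hk : k = i
  · subst hk; rw [Function.update_self]; exact hτ h
  · rw [Function.update_of_ne hk]; exact hσ k h

lemma stageProfile_update (σ : ∀ i : I, List (∀ j, A j) → A i → ℝ) (i : I)
    (τ : List (∀ j, A j) → A i → ℝ) (h : List (∀ j, A j)) :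
    (fun j => Function.update σ i τ j h) = Function.update (fun j => σ j h) i (τ h) := by
  funext j
  exact Function.apply_update (fun k (s : List (∀ j, A j) → A k → ℝ) => s h) σ i τ j

lemma histProb_decomp {σ : ∀ i : I, List (∀ j, A j) → A i → ℝ} (hσ : ValidStrat σ)
    (j : I) (l : List (∀ j, A j)) :
    ∑ aj : A j, σ j [] aj * histProb (Function.update σ j (devStrat σ j aj)) l
      = histProb σ l := by
  induction l with
  | nil => simpa [histProb] using (hσ j []).2
  | cons b h ih =>
      have hcons : ∀ (σ'' : ∀ i : I, List (∀ j, A j) → A i → ℝ),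
          histProb σ'' (b :: h) = (∏ k, σ'' k h (b k)) * histProb σ'' h := fun _ => rfl
      by_cases hh : h = []
      · subst hh
        have hst : ∀ aj : A j,
            (∏ k, Function.update σ j (devStrat σ j aj) k [] (b k))
              = pureAction aj (b j) * ∏ k ∈ Finset.univ \ {j}, σ k [] (b k) := by
          intro aj
          rw [show (fun k => Function.update σ j (devStrat σ j aj) k [] (b k))
              = Function.update (fun k => σ k [] (b k)) j (devStrat σ j aj [] (b j)) from
              funext fun k => Function.apply_update
                (fun k (s : List (∀ j, A j) → A k → ℝ) => s [] (b k)) σ j _ k]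
          rw [Finset.prod_update_of_mem (Finset.mem_univ j)]
          simp [devStrat]
        simp only [hcons, hst, histProb]
        rw [Finset.sum_eq_single (b j)]
        · have hpa : pureAction (b j) (b j) = 1 := by simp [pureAction]
          rw [hpa, Finset.prod_eq_mul_prod_sdiff_singleton_of_mem (Finset.mem_univ j)
            (fun k => σ k [] (b k))]
          ring
        · intro a' _ ha'
          have hpa : pureAction a' (b j) = 0 := by
            simp only [pureAction, if_neg (Ne.symm ha')]
          rw [hpa]; ring
        · intro hmem; exact absurd (Finset.mem_univ (b j)) hmem
      · have hfac : ∀ (aj : A j) (k : I),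
            Function.update σ j (devStrat σ j aj) k h = σ k h := by
          intro aj k
          by_cases hk : k = j
          · subst hk
            rw [Function.update_self]
            simp [devStrat, hh]
          · rw [Function.update_of_ne hk]
        simp only [hcons, hfac]
        calc ∑ aj : A j, σ j [] aj * ((∏ k, σ k h (b k))
                * histProb (Function.update σ j (devStrat σ j aj)) h)
            = (∏ k, σ k h (b k)) * ∑ aj : A j, σ j [] aj
                * histProb (Function.update σ j (devStrat σ j aj)) h := by
              rw [Finset.mul_sum]; exact Finset.sum_congr rfl fun _ _ => by ring
          _ = (∏ k, σ k h (b k)) * histProb σ h := by rw [ih]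

lemma expReward_decomp (g : I → (∀ i, A i) → ℝ)
    {σ : ∀ i : I, List (∀ j, A j) → A i → ℝ} (hσ : ValidStrat σ) (j : I) (t : ℕ) :
    ∑ aj : A j, σ j [] aj * expReward g (Function.update σ j (devStrat σ j aj)) j t
      = expReward g σ j t := by
  unfold expReward
  simp only [Finset.mul_sum]
  rw [Finset.sum_comm]
  refine Finset.sum_congr rfl fun v _ => ?_
  simp only [← mul_assoc]
  rw [← Finset.sum_mul, histProb_decomp hσ j]

lemma payoff_decomp (g : I → (∀ i, A i) → ℝ)
    {σ : ∀ i : I, List (∀ j, A j) → A i → ℝ} (hσ : ValidStrat σ) (j : I)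
    {δ : I → ℝ} (h0 : 0 ≤ δ j) (h1 : δ j < 1) :
    ∑ aj : A j, σ j [] aj * payoff g (Function.update σ j (devStrat σ j aj)) δ j
      = payoff g σ δ j := by
  have hsum : ∀ aj : A j,
      Summable (fun t => δ j ^ t * expReward g (Function.update σ j (devStrat σ j aj)) j t) :=
    fun aj => summable_discounted h0 h1
      (fun t => abs_expReward_le (valid_update hσ (devStrat_valid hσ j aj)) j t)
  have key : ∑ aj : A j, σ j [] aj
        * ∑' t, δ j ^ t * expReward g (Function.update σ j (devStrat σ j aj)) j t
      = ∑' t, δ j ^ t * expReward g σ j t := by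
    have e1 : ∀ aj : A j, σ j [] aj
        * ∑' t, δ j ^ t * expReward g (Function.update σ j (devStrat σ j aj)) j t
        = ∑' t, σ j [] aj
          * (δ j ^ t * expReward g (Function.update σ j (devStrat σ j aj)) j t) :=
      fun aj => tsum_mul_left.symm
    simp only [e1]
    rw [← Summable.tsum_finsetSum (fun aj _ => (hsum aj).mul_left _)]
    refine tsum_congr fun t => ?_
    calc ∑ aj : A j, σ j [] aj
          * (δ j ^ t * expReward g (Function.update σ j (devStrat σ j aj)) j t)
        = δ j ^ t * ∑ aj : A j, σ j [] aj
            * expReward g (Function.update σ j (devStrat σ j aj)) j t := by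
          rw [Finset.mul_sum]; exact Finset.sum_congr rfl fun _ _ => by ring
      _ = δ j ^ t * expReward g σ j t := by rw [expReward_decomp g hσ j t]
  unfold payoff
  calc ∑ aj : A j, σ j [] aj * ((1 - δ j)
          * ∑' t, δ j ^ t * expReward g (Function.update σ j (devStrat σ j aj)) j t)
      = (1 - δ j) * ∑ aj : A j, σ j [] aj
          * ∑' t, δ j ^ t * expReward g (Function.update σ j (devStrat σ j aj)) j t := by
        rw [Finset.mul_sum]; exact Finset.sum_congr rfl fun _ _ => by ring
    _ = (1 - δ j) * ∑' t, δ j ^ t * expReward g σ j t := by rw [key]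

lemma eq_of_support_mem {β : Type*} [Fintype β] (p : β → ℝ) (y : β → ℝ) (Y : ℝ)
    (hp : ∀ b, 0 ≤ p b) (hsum : ∑ b, p b = 1) (hle : ∀ b, y b ≤ Y)
    (heq : ∑ b, p b * y b = Y) {b : β} (hb : 0 < p b) : y b = Y := by
  have h0 : ∑ b, p b * (Y - y b) = 0 := by
    have : ∑ b, p b * (Y - y b) = (∑ b, p b) * Y - ∑ b, p b * y b := by
      rw [Finset.sum_mul, ← Finset.sum_sub_distrib]
      exact Finset.sum_congr rfl fun _ _ => by ring
    rw [this, hsum, heq, one_mul, sub_self]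
  have hall := (Finset.sum_eq_zero_iff_of_nonneg
    (fun c _ => mul_nonneg (hp c) (by linarith [hle c]))).1 h0 b (Finset.mem_univ b)
  rcases mul_eq_zero.1 hall with h | h
  · exact absurd h hb.ne'
  · linarith

end AuxDev

section AuxMI

set_option linter.unusedSectionVars false

variable {I : Type*} [Fintype I] [DecidableEq I]
variable {A : I → Type*} [∀ i, Fintype (A i)] [∀ i, DecidableEq (A i)] [∀ i, Nonempty (A i)]

lemma expReward_zero (g : I → (∀ i, A i) → ℝ)
    (σ : ∀ i : I, List (∀ j, A j) → A i → ℝ) (j : I) :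
    expReward g σ j 0 = mixedPayoff g j (fun k => σ k []) := by
  rw [expReward_eq_sum]
  rw [Finset.sum_eq_single (fun _ : Fin 0 => Classical.arbitrary (∀ j, A j))]
  · simp [histProb, List.ofFn_zero]
  · intro w _ hw
    exact absurd (funext fun x => absurd x.2 (by omega) : w = _) hw
  · intro hmem; exact absurd (Finset.mem_univ _) hmem

/-- In a repeated-game Nash equilibrium at every scalar discount factor in `[δlow, 1)`,
the first-round mixed action profile is myopically indifferent. -/
lemma stage_MI (g : I → (∀ i, A i) → ℝ) (σ : ∀ i : I, List (∀ j, A j) → A i → ℝ)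
    (δlow : ℝ) (h0 : 0 ≤ δlow) (h1 : δlow < 1)
    (hN : ∀ x, δlow ≤ x → x < 1 → IsNash g σ (fun _ => x)) :
    (fun j => σ j []) ∈ MIset g := by
  have hσ : ValidStrat σ := (hN δlow le_rfl h1).1
  refine ⟨fun j => hσ j [], ?_⟩
  intro j aj hpos
  set σ' := Function.update σ j (devStrat σ j aj) with hσ'def
  have hσ'v : ValidStrat σ' := valid_update hσ (devStrat_valid hσ j aj)
  set d : ℕ → ℝ := fun t => expReward g σ' j t - expReward g σ j t with hd
  have hdb : ∀ t, |d t| ≤ 2 * gBound g j := by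
    intro t
    have hb1 := abs_le.1 (abs_expReward_le (g := g) hσ'v j t)
    have hb2 := abs_le.1 (abs_expReward_le (g := g) hσ j t)
    rw [hd, abs_le]
    constructor <;> simp only <;> linarith [hb1.1, hb1.2, hb2.1, hb2.2]
  have hz : ∀ x, δlow ≤ x → x < 1 → ∑' t, d t * x ^ t = 0 := by
    intro x hx1 hx2
    have hx0 : 0 ≤ x := h0.trans hx1
    have hNx := hN x hx1 hx2
    have hple : ∀ a' : A j,
        payoff g (Function.update σ j (devStrat σ j a')) (fun _ => x) j
          ≤ payoff g σ (fun _ => x) j :=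
      fun a' => hNx.2 j (devStrat σ j a') (devStrat_valid hσ j a')
    have hdec := payoff_decomp (δ := fun _ => x) g hσ j hx0 hx2
    have hpeq : payoff g σ' (fun _ => x) j = payoff g σ (fun _ => x) j :=
      eq_of_support_mem (fun a' => σ j [] a')
        (fun a' => payoff g (Function.update σ j (devStrat σ j a')) (fun _ => x) j)
        (payoff g σ (fun _ => x) j) (fun a' => (hσ j []).1 a') (hσ j []).2 hple hdec hpos
    have hs' : Summable (fun t => x ^ t * expReward g σ' j t) :=
      summable_discounted hx0 hx2 (fun t => abs_expReward_le hσ'v j t)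
    have hs : Summable (fun t => x ^ t * expReward g σ j t) :=
      summable_discounted hx0 hx2 (fun t => abs_expReward_le hσ j t)
    have hT : (∑' t, x ^ t * expReward g σ' j t) = ∑' t, x ^ t * expReward g σ j t := by
      have h1x : (1 : ℝ) - x ≠ 0 := by intro hc; linarith
      unfold payoff at hpeq
      exact mul_left_cancel₀ h1x hpeq
    calc ∑' t, d t * x ^ t
        = ∑' t, (x ^ t * expReward g σ' j t - x ^ t * expReward g σ j t) :=
          tsum_congr fun t => by rw [hd]; ring
      _ = (∑' t, x ^ t * expReward g σ' j t) - ∑' t, x ^ t * expReward g σ j t :=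
          Summable.tsum_sub hs' hs
      _ = 0 := by rw [hT, sub_self]
  have hd0 : d 0 = 0 := coeff_zero_eq_zero_of_tsum_eq_zero d _ hdb δlow h0 h1 hz
  have e0 : expReward g σ j 0 = mixedPayoff g j (fun k => σ k []) := expReward_zero g σ j
  have e0' : expReward g σ' j 0 = devPayoff g j (fun k => σ k []) aj := by
    rw [expReward_zero g σ' j, hσ'def, devPayoff, stageProfile_update]
    have hds : devStrat σ j aj [] = pureAction aj := by simp [devStrat]
    rw [hds]
  have : devPayoff g j (fun k => σ k []) aj - mixedPayoff g j (fun k => σ k []) = 0 := by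
    rw [← e0, ← e0']
    exact hd0
  linarith
end AuxMI

section MainAux

set_option linter.unusedSectionVars false

variable {I : Type*} [Fintype I] [DecidableEq I]
variable {A : I → Type*} [∀ i, Fintype (A i)] [∀ i, DecidableEq (A i)] [∀ i, Nonempty (A i)]

lemma contStrat_nil (σ : ∀ i : I, List (∀ j, A j) → A i → ℝ) : contStrat σ [] = σ := by
  funext i h
  simp [contStrat]

end MainAux

/-- The payoff of a Blackwell SPNE, at any admissible discount factor
vector, is at least the MI-minmax payoff of each player. -/
theorem blackwell_spne_payoff_ge_minmaxMI
    {I : Type*} [Fintype I] [DecidableEq I]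
    {A : I → Type*} [∀ i, Fintype (A i)] [∀ i, DecidableEq (A i)] [∀ i, Nonempty (A i)]
    (g : I → (∀ i, A i) → ℝ)
    (σ : ∀ i : I, List (∀ j, A j) → A i → ℝ)
    (δlow : ℝ) (h0 : 0 ≤ δlow) (h1 : δlow < 1)
    (hB : IsBlackwellSPNE g σ δlow) :
    ∀ δ : I → ℝ, (∀ i, δlow ≤ δ i ∧ δ i < 1) →
      ∀ i : I, minmaxMI g i ≤ payoff g σ δ i := by
  intro δ hδ i
  have hδi0 : 0 ≤ δ i := h0.trans (hδ i).1
  have hδi1 : δ i < 1 := (hδ i).2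
  have hNash : IsNash g σ δ := by
    have := hB δ hδ []
    rwa [contStrat_nil] at this
  have hσ : ValidStrat σ := hNash.1
  have hMI : ∀ h : List (∀ j, A j), (fun j => σ j h) ∈ MIset g := by
    intro h
    have hNh : ∀ x, δlow ≤ x → x < 1 → IsNash g (contStrat σ h) (fun _ => x) :=
      fun x hx1 hx2 => hB (fun _ => x) (fun _ => ⟨hx1, hx2⟩) h
    exact stage_MI g (contStrat σ h) δlow h0 h1 hNh
  have hBdd : BddBelow {x : ℝ | ∃ α ∈ MIset g, x = ⨆ ai : A i, devPayoff g i α ai} := by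
    refine ⟨-(gBound g i), fun x hx => ?_⟩
    obtain ⟨α, hα, rfl⟩ := hx
    obtain ⟨ai0⟩ := (inferInstance : Nonempty (A i))
    have hlow : -(gBound g i) ≤ devPayoff g i α ai0 :=
      (abs_le.1 (abs_devPayoff_le hα.1 ai0)).1
    exact hlow.trans (le_ciSup (Set.Finite.bddAbove (Set.finite_range _)) ai0)
  have hBR : ∀ h : List (∀ j, A j), ∃ ai : A i,
      ∀ ai', devPayoff g i (fun j => σ j h) ai' ≤ devPayoff g i (fun j => σ j h) ai :=
    fun h => Finite.exists_max _
  choose br hbr using hBR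
  set τ : List (∀ j, A j) → A i → ℝ := fun h => pureAction (br h) with hτ
  have hτv : ∀ h, (∀ a, 0 ≤ τ h a) ∧ (∑ a, τ h a) = 1 := fun h => pureAction_valid (br h)
  set σ' := Function.update σ i τ with hσ'def
  have hσ'v : ValidStrat σ' := valid_update hσ hτv
  have hkey : ∀ h, minmaxMI g i ≤ devPayoff g i (fun j => σ j h) (br h) := by
    intro h
    have hmem : (⨆ ai : A i, devPayoff g i (fun j => σ j h) ai)
        ∈ {x : ℝ | ∃ α ∈ MIset g, x = ⨆ ai : A i, devPayoff g i α ai} := ⟨_, hMI h, rfl⟩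
    exact (csInf_le hBdd hmem).trans (ciSup_le (hbr h))
  have hstage : ∀ h, mixedPayoff g i (fun j => σ' j h)
      = devPayoff g i (fun j => σ j h) (br h) := by
    intro h
    rw [hσ'def, stageProfile_update]
    rfl
  have hER : ∀ t, minmaxMI g i ≤ expReward g σ' i t := by
    intro t
    rw [expReward_eq_sum]
    have hterm : ∀ w : Fin t → (∀ j, A j),
        histProb σ' (List.ofFn w) * minmaxMI g i
          ≤ histProb σ' (List.ofFn w) * mixedPayoff g i (fun j => σ' j (List.ofFn w)) := by
      intro w
      rw [hstage]
      exact mul_le_mul_of_nonneg_left (hkey _) (histProb_nonneg hσ'v _)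
    calc minmaxMI g i
        = ∑ w : Fin t → (∀ j, A j), histProb σ' (List.ofFn w) * minmaxMI g i := by
          rw [← Finset.sum_mul, sum_histProb hσ'v, one_mul]
      _ ≤ _ := Finset.sum_le_sum fun w _ => hterm w
  have hp1 : minmaxMI g i ≤ payoff g σ' δ i := by
    unfold payoff
    exact le_discounted_sum hδi0 hδi1 (fun t => abs_expReward_le (g := g) hσ'v i t) hER
  exact hp1.trans (hNash.2 i τ hτv)
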